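/- Let X be a T0 topological space. A subset U of X is open in the topology S(X) determined by the convergence class S_X if and only if U is open in the directed topology d(X). Here S_X consists of pairs ((x_i)_{i∈I}, x) such that some directed set D of eventual lower bounds of the net (x_i) converges to x in X. -/
import Mathlib


/-- A net in `X`: a function from a (nonempty, directed) preordered index type to `X`. -/
structure PNet (X : Type) : Type 1 where
  ι : Type
  le : ι → ι → Prop
  refl : ∀ i, le i i
  trans : ∀ i j k, le i j → le j k → le i k
  nonempty : Nonempty ι
  directed : ∀ i j, ∃ k, le i k ∧ le j k
  toFun : ι → X

/-- A net is eventually in a set. -/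
def PNet.Eventually {X : Type} (n : PNet X) (U : Set X) : Prop :=
  ∃ j, ∀ k, n.le j k → n.toFun k ∈ U

/-- The specialization order of a topological space: `x ≤ y` iff `x ∈ closure {y}`. -/
def specLe {X : Type} [TopologicalSpace X] (x y : X) : Prop := x ∈ closure {y}

/-- Convergence of a directed subset `D` (viewed as a monotone net indexed by itself)
to a point `x`. -/
def dirConv {X : Type} [TopologicalSpace X] (D : Set X) (x : X) : Prop :=
  ∀ V : Set X, IsOpen V → x ∈ V → ∃ d ∈ D, ∀ e ∈ D, specLe d e → e ∈ V

/-- `U` is directed-open: for every directed subset `D` (w.r.t. the specialization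
order) converging to some `x ∈ U`, `D` meets `U`. -/
def DOpen {X : Type} [TopologicalSpace X] (U : Set X) : Prop :=
  ∀ (D : Set X) (x : X), D.Nonempty → DirectedOn specLe D → dirConv D x → x ∈ U →
    (D ∩ U).Nonempty

/-- `y` is an eventual lower bound of the net `n`. -/
def eventualLB {X : Type} [TopologicalSpace X] (n : PNet X) (y : X) : Prop :=
  ∃ k, ∀ i, n.le k i → specLe y (n.toFun i)

/-- The pair `(n, x)` is in the class `S_X`: some directed set of eventual lower
bounds of `n` converges to `x`. -/
def SPair {X : Type} [TopologicalSpace X] (n : PNet X) (x : X) : Prop :=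
  ∃ D : Set X, D.Nonempty ∧ DirectedOn specLe D ∧ (∀ d ∈ D, eventualLB n d) ∧
    dirConv D x

/-- For a `T0` space `X`: `U` is open in the topology `S(X)` determined by the
convergence class `S_X` iff `U` is open in the directed topology `d(X)`. -/
theorem stmt15 {X : Type} [TopologicalSpace X] [T0Space X] :
    ∀ U : Set X,
      (∀ (n : PNet X) (x : X), SPair n x → x ∈ U → n.Eventually U) ↔ DOpen U := by
  intro U
  constructor
  · -- S-open → DOpen
    intro h D x hne hdir hconv hxU
    -- build the net indexed by D itself
    set n : PNet X :=
      { ι := D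
        le := fun d e => specLe d.1 e.1
        refl := fun d => subset_closure rfl
        trans := fun i j k hij hjk =>
          (closure_mono (Set.singleton_subset_iff.mpr hjk)).trans
            closure_closure.subset hij
        nonempty := hne.to_subtype
        directed := fun i j => by
          obtain ⟨k, hk, hik, hjk⟩ := hdir i.1 i.2 j.1 j.2
          exact ⟨⟨k, hk⟩, hik, hjk⟩
        toFun := fun d => d.1 } with hn
    have hS : SPair n x := by
      refine ⟨D, hne, hdir, ?_, hconv⟩
      intro d hd
      exact ⟨⟨d, hd⟩, fun i hi => hi⟩
    obtain ⟨j, hj⟩ := h n x hS hxU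
    exact ⟨j.1, j.2, hj j (subset_closure rfl)⟩
  · -- DOpen → S-open
    intro h n x hS hxU
    -- DOpen sets are upper sets w.r.t. specLe
    have hup : ∀ d ∈ U, ∀ y, specLe d y → y ∈ U := by
      intro d hd y hdy
      have hconv : dirConv {y} d := by
        intro V hV hdV
        refine ⟨y, rfl, fun e he _ => ?_⟩
        rcases he with rfl
        rcases mem_closure_iff.mp hdy V hV hdV with ⟨z, hzV, hz⟩
        rcases hz with rfl
        exact hzV
      obtain ⟨z, hz, hzU⟩ := h {y} d ⟨y, rfl⟩
        (fun a ha b hb => ⟨y, rfl, by rcases ha with rfl; exact subset_closure rfl,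
          by rcases hb with rfl; exact subset_closure rfl⟩) hconv hd
      rcases hz with rfl
      exact hzU
    obtain ⟨D, hne, hdir, hlb, hconv⟩ := hS
    obtain ⟨d, hdD, hdU⟩ := h D x hne hdir hconv hxU
    obtain ⟨k, hk⟩ := hlb d hdD
    exact ⟨k, fun i hi => hup d hdU _ (hk i hi)⟩
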